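/- Let S be a set of n ≥ 2 generators, d ∈ (0,1), and let 𝓛 be a language of reduced words over S with growth rate at least k, where k > (2n−1)^{1−d}. Then the probability that a random set of relators at density d and length L contains at least one element of 𝓛 tends to 1 as L → ∞. -/

import Mathlib

open Filter Topology

/-- The symmetrized alphabet `S ∪ S⁻¹` for a set `S` of `n` generators. -/
abbrev Letter (n : ℕ) := Fin n × Bool

/-- The formal inverse of a letter. -/
def linv {n : ℕ} (a : Letter n) : Letter n := (a.1, !a.2)

/-- A word is reduced if no two consecutive letters are inverse to each other. -/
def Reduced {n : ℕ} (w : List (Letter n)) : Prop :=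
  w.Chain' fun a b => b ≠ linv a

/-- The set of all reduced words of length `L` over `n` generators. -/
def RW (n L : ℕ) : Set (List (Letter n)) :=
  {w | w.length = L ∧ Reduced w}

lemma rw_finite (n l : ℕ) : (RW n l).Finite :=
  (List.finite_length_eq (Letter n) l).subset fun _ hw => hw.1

lemma rw_nonempty (n l : ℕ) (hn : 1 ≤ n) : (RW n l).Nonempty := by
  refine ⟨List.replicate l ((⟨0, hn⟩ : Fin n), true), List.length_replicate .., ?_⟩
  induction l with
  | zero => exact List.isChain_nil
  | succ m ih =>
    cases m with
    | zero => exact List.isChain_singleton _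
    | succ p =>
      exact List.IsChain.cons_cons (by simp [linv]) ih

lemma rw_card_pos (n l : ℕ) (hn : 1 ≤ n) : 0 < Nat.card ↥(RW n l) := by
  haveI := (rw_finite n l).to_subtype
  haveI := (rw_nonempty n l hn).to_subtype
  exact Nat.card_pos

lemma concat_getLastD {α : Type*} (w : List α) (h : w ≠ []) (d : α) :
    w.dropLast ++ [w.getLastD d] = w := by
  rw [List.getLastD_eq_getLast?, List.getLast?_eq_getLast h, Option.getD_some]
  exact List.dropLast_append_getLast h

lemma letter_card (n : ℕ) : Fintype.card (Letter n) = 2 * n := by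
  simp [Fintype.card_prod, mul_comm]

lemma rw_card_step (n l : ℕ) (hn : 1 ≤ n) (hl : 1 ≤ l) :
    Nat.card ↥(RW n (l + 1)) ≤ (2 * n - 1) * Nat.card ↥(RW n l) := by
  classical
  haveI : Fintype ↥(RW n l) := (rw_finite n l).fintype
  set a₀ : Letter n := ((⟨0, hn⟩ : Fin n), true) with ha₀
  have hne : ∀ w : List (Letter n), w ∈ RW n (l + 1) → w ≠ [] := by
    intro w hw h
    have := hw.1
    rw [h] at this
    simp at this
  have hdrop : ∀ w : List (Letter n), w ∈ RW n (l + 1) → w.dropLast ∈ RW n l := by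
    intro w hw
    have hconc := concat_getLastD w (hne w hw) a₀
    have hch : Reduced (w.dropLast ++ [w.getLastD a₀]) := by rw [hconc]; exact hw.2
    exact ⟨by simp [List.length_dropLast, hw.1], (List.isChain_append.1 hch).1⟩
  have hlast : ∀ w : List (Letter n), w ∈ RW n (l + 1) →
      ∀ x ∈ w.dropLast.getLast?, w.getLastD a₀ ≠ linv x := by
    intro w hw x hx
    have hconc := concat_getLastD w (hne w hw) a₀
    have hch : Reduced (w.dropLast ++ [w.getLastD a₀]) := by rw [hconc]; exact hw.2
    exact (List.isChain_append.1 hch).2.2 x hx _ rfl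
  let T := Σ w : ↥(RW n l), {b : Letter n // ∀ x ∈ (w : List (Letter n)).getLast?, b ≠ linv x}
  let f : ↥(RW n (l + 1)) → T := fun w =>
    ⟨⟨(w : List (Letter n)).dropLast, hdrop w w.2⟩,
      ⟨(w : List (Letter n)).getLastD a₀, hlast w w.2⟩⟩
  have hfinj : Function.Injective f := by
    intro w₁ w₂ h
    have h' := congrArg (fun p : T => (p.1 : List (Letter n)) ++ [(p.2 : Letter n)]) h
    simp only [f, concat_getLastD _ (hne _ w₁.2) a₀, concat_getLastD _ (hne _ w₂.2) a₀] at h'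
    exact Subtype.ext h'
  have hTcard : Nat.card T = Nat.card ↥(RW n l) * (2 * n - 1) := by
    rw [Nat.card_eq_fintype_card, Nat.card_eq_fintype_card, Fintype.card_sigma]
    have : ∀ w : ↥(RW n l),
        Fintype.card {b : Letter n // ∀ x ∈ (w : List (Letter n)).getLast?, b ≠ linv x}
          = 2 * n - 1 := by
      intro w
      have hwne : (w : List (Letter n)) ≠ [] := by
        intro h
        have := w.2.1
        rw [h] at this
        simp at this
        omega
      have hsome : (w : List (Letter n)).getLast? = some ((w : List (Letter n)).getLast hwne) :=
        List.getLast?_eq_getLast hwne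
      set a := (w : List (Letter n)).getLast hwne
      have e : {b : Letter n // ∀ x ∈ (w : List (Letter n)).getLast?, b ≠ linv x}
          ≃ {b : Letter n // ¬ b = linv a} :=
        Equiv.subtypeEquivRight (by intro b; simp [hsome])
      rw [Fintype.card_congr e, Fintype.card_subtype_compl, Fintype.card_subtype_eq, letter_card]
    rw [Finset.sum_congr rfl fun w _ => this w, Finset.sum_const, Finset.card_univ, smul_eq_mul]
  calc Nat.card ↥(RW n (l + 1)) ≤ Nat.card T := Nat.card_le_card_of_injective f hfinj
    _ = _ := by rw [hTcard, mul_comm]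

lemma rw_card_le (n l : ℕ) (hn : 1 ≤ n) :
    Nat.card ↥(RW n l) ≤ 2 * n * (2 * n - 1) ^ l := by
  induction l with
  | zero =>
    have : RW n 0 = {([] : List (Letter n))} := by
      ext w
      constructor
      · intro hw; simpa using List.length_eq_zero_iff.1 hw.1
      · intro hw; simp at hw; exact ⟨by simp [hw], by simp [hw, Reduced, List.Chain']⟩
    rw [this]
    simpa using by omega
  | succ m ih =>
    cases Nat.eq_zero_or_pos m with
    | inl h =>
      subst h
      -- RW n 1 : inject into Letter n
      set a₀ : Letter n := ((⟨0, hn⟩ : Fin n), true) with ha₀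
      have : Nat.card ↥(RW n 1) ≤ Nat.card (Letter n) := by
        refine Nat.card_le_card_of_injective
          (fun w => (w : List (Letter n)).getLastD a₀) ?_
        intro w₁ w₂ h
        obtain ⟨a, ha⟩ := List.length_eq_one_iff.1 w₁.2.1
        obtain ⟨b, hb⟩ := List.length_eq_one_iff.1 w₂.2.1
        apply Subtype.ext
        rw [ha, hb]
        have h' : (↑w₁ : List (Letter n)).getLastD a₀ = (↑w₂ : List (Letter n)).getLastD a₀ := h
        rw [ha, hb] at h'
        simpa using h'
      have hcard : Nat.card (Letter n) = 2 * n := by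
        rw [Nat.card_eq_fintype_card, letter_card]
      calc Nat.card ↥(RW n 1) ≤ 2 * n := by rw [← hcard]; exact this
        _ ≤ 2 * n * (2 * n - 1) ^ 1 := by rw [pow_one]; exact Nat.le_mul_of_pos_right _ (by omega)
    | inr h =>
      calc Nat.card ↥(RW n (m + 1)) ≤ (2 * n - 1) * Nat.card ↥(RW n m) :=
            rw_card_step n m hn h
        _ ≤ (2 * n - 1) * (2 * n * (2 * n - 1) ^ m) := Nat.mul_le_mul_left _ ih
        _ = 2 * n * (2 * n - 1) ^ (m + 1) := by ring

lemma hit_card (n l m : ℕ) (L : Set (List (Letter n))) :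
    Nat.card {f : Fin m → ↥(RW n l) // ∃ i, (f i : List (Letter n)) ∈ L}
      = Nat.card ↥(RW n l) ^ m
        - (Nat.card ↥(RW n l) - Nat.card ↥(L ∩ RW n l)) ^ m := by
  classical
  haveI : Fintype ↥(RW n l) := (rw_finite n l).fintype
  have ea : ↥(L ∩ RW n l) ≃ {w : ↥(RW n l) // (w : List (Letter n)) ∈ L} :=
    { toFun := fun x => ⟨⟨x.1, x.2.2⟩, x.2.1⟩
      invFun := fun x => ⟨x.1.1, x.2, x.1.2⟩
      left_inv := fun x => rfl
      right_inv := fun x => rfl }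
  have ha : Nat.card ↥(L ∩ RW n l)
      = Fintype.card {w : ↥(RW n l) // (w : List (Letter n)) ∈ L} := by
    rw [Nat.card_congr ea, Nat.card_eq_fintype_card]
  have enot : {f : Fin m → ↥(RW n l) // ¬ ∃ i, (f i : List (Letter n)) ∈ L}
      ≃ (Fin m → {w : ↥(RW n l) // ¬ (w : List (Letter n)) ∈ L}) := by
    refine (Equiv.subtypeEquivRight fun f => ?_).trans (Equiv.subtypePiEquivPi)
    push_neg
    rfl
  have hcompl := Fintype.card_subtype_compl (fun f : Fin m → ↥(RW n l) =>
    ∃ i, (f i : List (Letter n)) ∈ L)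
  have hle := Fintype.card_subtype_le (fun f : Fin m → ↥(RW n l) =>
    ∃ i, (f i : List (Letter n)) ∈ L)
  have hnot : Fintype.card {f : Fin m → ↥(RW n l) // ¬ ∃ i, (f i : List (Letter n)) ∈ L}
      = (Fintype.card ↥(RW n l) - Nat.card ↥(L ∩ RW n l)) ^ m := by
    rw [Fintype.card_congr enot, Fintype.card_fun, Fintype.card_subtype_compl, ha,
      Fintype.card_fin]
  have htot : Fintype.card (Fin m → ↥(RW n l)) = Fintype.card ↥(RW n l) ^ m := by
    rw [Fintype.card_fun, Fintype.card_fin]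
  have goal' : Fintype.card {f : Fin m → ↥(RW n l) // ∃ i, (f i : List (Letter n)) ∈ L}
      = Fintype.card (Fin m → ↥(RW n l))
        - Fintype.card {f : Fin m → ↥(RW n l) // ¬ ∃ i, (f i : List (Letter n)) ∈ L} := by
    rw [hcompl]
    exact (Nat.sub_sub_self hle).symm
  rw [Nat.card_eq_fintype_card, Nat.card_eq_fintype_card (α := ↥(RW n l)), goal', hnot, htot]

/-- The number `⌊(2n-1)^(dL)⌋` of relators in a random set of relators at density `d`
and length `L`. -/
noncomputable def numRelators (n : ℕ) (d : ℝ) (L : ℕ) : ℕ :=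
  ⌊(2 * (n : ℝ) - 1) ^ (d * (L : ℝ))⌋₊

/-- The probability that a `⌊(2n-1)^(dL)⌋`-tuple of reduced words of length `L`,
chosen independently and uniformly at random, contains at least one element of `𝓛`:
the number of tuples meeting `𝓛` divided by the total number of tuples. -/
noncomputable def hitProb (n : ℕ) (d : ℝ) (L : Set (List (Letter n))) (l : ℕ) : ℝ :=
  (Nat.card {f : Fin (numRelators n d l) → ↥(RW n l) // ∃ i, (f i : List (Letter n)) ∈ L} : ℝ) /
    (Nat.card ↥(RW n l) : ℝ) ^ (numRelators n d l)

lemma floor_half {x : ℝ} (hx : 1 ≤ x) : x / 2 ≤ (⌊x⌋₊ : ℝ) := by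
  have h1 : (1 : ℕ) ≤ ⌊x⌋₊ := Nat.le_floor (by exact_mod_cast hx)
  have h1' : (1 : ℝ) ≤ (⌊x⌋₊ : ℝ) := by exact_mod_cast h1
  have h2 : x < ⌊x⌋₊ + 1 := Nat.lt_floor_add_one x
  linarith

/-- If a language `𝓛` of reduced words over `n ≥ 2` generators has growth rate at least
`k > (2n-1)^(1-d)`, then a random set of relators at density `d` and length `l` contains
an element of `𝓛` with probability tending to `1` as `l → ∞`. -/
theorem random_relators_meet_large_language (n : ℕ) (hn : 2 ≤ n)
    (d : ℝ) (hd : d ∈ Set.Ioo (0 : ℝ) 1)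
    (L : Set (List (Letter n))) (hred : ∀ w ∈ L, Reduced w)
    (k : ℝ) (hk : (2 * (n : ℝ) - 1) ^ ((1 : ℝ) - d) < k)
    (c : ℝ) (hc : 0 < c)
    (hgrowth : ∀ᶠ l : ℕ in atTop,
      c * k ^ l ≤ (Nat.card ↥(L ∩ RW n l) : ℝ)) :
    Tendsto (hitProb n d L) atTop (𝓝 1) := by
  obtain ⟨hd0, hd1⟩ := hd
  have hn1 : (1 : ℕ) ≤ n := le_trans (by norm_num) hn
  have hnR : (2 : ℝ) ≤ (n : ℝ) := by exact_mod_cast hn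
  have hb1 : (1 : ℝ) < 2 * (n : ℝ) - 1 := by linarith
  have hb0 : (0 : ℝ) < 2 * (n : ℝ) - 1 := by linarith
  have hk0 : (0 : ℝ) < k := lt_trans (Real.rpow_pos_of_pos hb0 _) hk
  set N : ℕ → ℕ := fun l => Nat.card ↥(RW n l) with hN
  set A : ℕ → ℕ := fun l => Nat.card ↥(L ∩ RW n l) with hA
  set m : ℕ → ℕ := fun l => numRelators n d l with hm
  have hNpos : ∀ l, 0 < N l := fun l => rw_card_pos n l hn1
  have hNR : ∀ l, (0 : ℝ) < (N l : ℝ) := fun l => by exact_mod_cast hNpos l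
  have hAle : ∀ l, A l ≤ N l := by
    intro l
    show Nat.card ↥(L ∩ RW n l) ≤ Nat.card ↥(RW n l)
    rw [Nat.card_coe_set_eq, Nat.card_coe_set_eq]
    exact Set.ncard_le_ncard Set.inter_subset_right (rw_finite n l)
  set q : ℕ → ℝ := fun l => ((N l - A l : ℕ) : ℝ) / (N l : ℝ) with hq
  -- hitProb in terms of q
  have hhit : ∀ l, hitProb n d L l = 1 - q l ^ m l := by
    intro l
    have hpowle : (N l - A l) ^ m l ≤ N l ^ m l :=
      Nat.pow_le_pow_left (Nat.sub_le _ _) _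
    have hne : ((N l : ℝ)) ^ m l ≠ 0 := pow_ne_zero _ (hNR l).ne'
    rw [hitProb, hit_card, Nat.cast_sub hpowle, Nat.cast_pow, Nat.cast_pow, sub_div,
      div_self hne, hq, div_pow]
  -- bounds on q
  have hq0 : ∀ l, 0 ≤ q l := fun l =>
    div_nonneg (Nat.cast_nonneg _) (Nat.cast_nonneg _)
  set g : ℕ → ℝ := fun l => (m l : ℝ) * ((A l : ℝ) / (N l : ℝ)) with hg
  have hqexp : ∀ l, q l ^ m l ≤ Real.exp (-(g l)) := by
    intro l
    have hqe : q l = 1 - (A l : ℝ) / (N l : ℝ) := by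
      show ((N l - A l : ℕ) : ℝ) / (N l : ℝ) = _
      rw [Nat.cast_sub (hAle l), sub_div, div_self (hNR l).ne']
    have h1 : q l ≤ Real.exp (-((A l : ℝ) / (N l : ℝ))) := by
      have := Real.add_one_le_exp (-((A l : ℝ) / (N l : ℝ)))
      rw [hqe]; linarith
    calc q l ^ m l ≤ Real.exp (-((A l : ℝ) / (N l : ℝ))) ^ m l :=
          pow_le_pow_left₀ (hq0 l) h1 _
      _ = Real.exp (-(g l)) := by
          rw [← Real.exp_nat_mul]
          congr 1
          rw [hg]
          ring
  -- g tends to infinity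
  have hr1 : 1 < k * (2 * (n : ℝ) - 1) ^ (d - 1) := by
    have he : (2 * (n : ℝ) - 1) ^ ((1 : ℝ) - d) * (2 * (n : ℝ) - 1) ^ (d - 1) = 1 := by
      rw [← Real.rpow_add hb0]; norm_num
    calc (1 : ℝ) = (2 * (n : ℝ) - 1) ^ ((1 : ℝ) - d) * (2 * (n : ℝ) - 1) ^ (d - 1) := he.symm
      _ < k * (2 * (n : ℝ) - 1) ^ (d - 1) :=
          mul_lt_mul_of_pos_right hk (Real.rpow_pos_of_pos hb0 _)
  have hCpos : (0 : ℝ) < c / (4 * n) := by positivity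
  have hCr : Tendsto (fun l : ℕ => (c / (4 * n)) * (k * (2 * (n : ℝ) - 1) ^ (d - 1)) ^ l)
      atTop atTop :=
    (tendsto_pow_atTop_atTop_of_one_lt hr1).const_mul_atTop hCpos
  have hrepr : ∀ l : ℕ, ((2 * (n : ℝ) - 1) ^ (d * (l : ℝ)) / 2) *
      ((c * k ^ l) / (2 * (n : ℝ) * (2 * (n : ℝ) - 1) ^ l))
      = (c / (4 * n)) * (k * (2 * (n : ℝ) - 1) ^ (d - 1)) ^ l := by
    intro l
    have hnat : ((2 * (n : ℝ) - 1) ^ (l : ℕ)) = (2 * (n : ℝ) - 1) ^ ((l : ℕ) : ℝ) :=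
      (Real.rpow_natCast _ _).symm
    have hnat' : ((2 * (n : ℝ) - 1) ^ (d - 1)) ^ (l : ℕ)
        = (2 * (n : ℝ) - 1) ^ ((d - 1) * (l : ℝ)) := by
      rw [← Real.rpow_natCast ((2 * (n : ℝ) - 1) ^ (d - 1)) l, ← Real.rpow_mul hb0.le]
    have he : (2 * (n : ℝ) - 1) ^ ((d - 1) * (l : ℝ)) * (2 * (n : ℝ) - 1) ^ ((l : ℕ) : ℝ)
        = (2 * (n : ℝ) - 1) ^ (d * (l : ℝ)) := by
      rw [← Real.rpow_add hb0]; ring_nf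
    have hpow_pos : (0 : ℝ) < (2 * (n : ℝ) - 1) ^ (l : ℕ) := pow_pos hb0 _
    have hnpos : (0 : ℝ) < (n : ℝ) := by linarith
    rw [mul_pow, hnat']
    rw [← he, hnat]
    field_simp
    ring
  have hmono : ∀ᶠ l : ℕ in atTop,
      (c / (4 * n)) * (k * (2 * (n : ℝ) - 1) ^ (d - 1)) ^ l ≤ g l := by
    filter_upwards [hgrowth] with l hgl
    rw [← hrepr l]
    have hm_ge : (2 * (n : ℝ) - 1) ^ (d * (l : ℝ)) / 2 ≤ (m l : ℝ) := by
      apply floor_half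
      exact Real.one_le_rpow hb1.le (by positivity)
    have hN_le : (N l : ℝ) ≤ 2 * (n : ℝ) * (2 * (n : ℝ) - 1) ^ l := by
      have h1 := rw_card_le n l hn1
      have h2 : ((2 * n * (2 * n - 1) ^ l : ℕ) : ℝ) = 2 * (n : ℝ) * (2 * (n : ℝ) - 1) ^ l := by
        push_cast [Nat.cast_sub (show 1 ≤ 2 * n by omega)]
        ring
      rw [← h2]
      exact_mod_cast h1
    have hdiv : (c * k ^ l) / (2 * (n : ℝ) * (2 * (n : ℝ) - 1) ^ l)
        ≤ (A l : ℝ) / (N l : ℝ) :=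
      div_le_div₀ (Nat.cast_nonneg _) hgl (hNR l) hN_le
    have hck : (0 : ℝ) ≤ (c * k ^ l) / (2 * (n : ℝ) * (2 * (n : ℝ) - 1) ^ l) := by positivity
    exact mul_le_mul hm_ge hdiv hck (Nat.cast_nonneg _)
  have hgtop : Tendsto g atTop atTop := tendsto_atTop_mono' atTop hmono hCr
  have hexp0 : Tendsto (fun l => Real.exp (-(g l))) atTop (𝓝 0) :=
    Real.tendsto_exp_neg_atTop_nhds_zero.comp hgtop
  have hqm0 : Tendsto (fun l => q l ^ m l) atTop (𝓝 0) :=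
    tendsto_of_tendsto_of_tendsto_of_le_of_le tendsto_const_nhds hexp0
      (fun l => pow_nonneg (hq0 l) _) hqexp
  have hfinal : Tendsto (fun l => 1 - q l ^ m l) atTop (𝓝 1) := by
    simpa using hqm0.const_sub 1
  exact hfinal.congr fun l => (hhit l).symm
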